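/- Let G be an abelian group, χ a bicharacter on ℤⁿ with values in G, E = {e₁, …, eₙ} a basis of ℤⁿ, and i ∈ {1, …, n}. Assume that for all j ≠ i the number m_{ij} := min{m ∈ ℕ₀ | χ(e_i,e_i)^m χ(e_i,e_j)χ(e_j,e_i) = 1, or χ(e_i,e_i)^{m+1} = 1 and χ(e_i,e_i) ≠ 1} exists, and let s_{i,E} be the linear automorphism of ℤⁿ with s_{i,E}(e_i) = -e_i and s_{i,E}(e_j) = e_j + m_{ij} e_i for j ≠ i. Let E' = s_{i,E}(E), i.e., e'_i = -e_i and e'_j = e_j + m_{ij} e_i for j ≠ i. Then for every j ≠ i the number m'_{ij} := min{m ∈ ℕ₀ | χ(e'_i,e'_i)^m χ(e'_i,e'_j)χ(e'_j,e'_i) = 1, or χ(e'_i,e'_i)^{m+1} = 1 and χ(e'_i,e'_i) ≠ 1} exists and equals m_{ij}; consequently s_{i,E'} = s_{i,E}. -/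

import Mathlib

/-- The defining condition for the integer `m_{ij}`: either
`χ(x,x)^m χ(x,y) χ(y,x) = 1`, or `χ(x,x)^{m+1} = 1` and `χ(x,x) ≠ 1`. -/
def ReflCond {n : ℕ} {G : Type*} [CommGroup G]
    (χ : (Fin n → ℤ) → (Fin n → ℤ) → G) (x y : Fin n → ℤ) (m : ℕ) : Prop :=
  χ x x ^ m * (χ x y * χ y x) = 1 ∨ (χ x x ^ (m + 1) = 1 ∧ χ x x ≠ 1)

lemma aux_refl {G : Type*} [CommGroup G] (a c : G) (M : ℕ)
    (hM : a ^ M * c = 1 ∨ (a ^ (M + 1) = 1 ∧ a ≠ 1))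
    (hmin : ∀ k, (a ^ k * c = 1 ∨ (a ^ (k + 1) = 1 ∧ a ≠ 1)) → M ≤ k) :
    (a ^ M * (c * a ^ (2 * M))⁻¹ = 1 ∨ (a ^ (M + 1) = 1 ∧ a ≠ 1)) ∧
    ∀ k, (a ^ k * (c * a ^ (2 * M))⁻¹ = 1 ∨ (a ^ (k + 1) = 1 ∧ a ≠ 1)) → M ≤ k := by
  rcases hM with h1 | h2
  · have hc : c = (a ^ M)⁻¹ := eq_inv_of_mul_eq_one_left (by rw [mul_comm]; exact h1)
    constructor
    · left
      rw [hc, two_mul, pow_add, inv_mul_cancel_left, mul_inv_cancel]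
    · intro k hk
      by_contra hlt
      push_neg at hlt
      rcases hk with hk1 | hk2
      · have hak : a ^ k = a ^ M := by
          have := mul_inv_eq_one.mp hk1
          rw [hc, two_mul, pow_add, inv_mul_cancel_left] at this
          exact this
        have hd : a ^ (M - k) = 1 := by
          have : a ^ k * a ^ (M - k) = a ^ k * 1 := by
            rw [mul_one, ← pow_add, hak]
            congr 1; omega
          exact mul_left_cancel this
        by_cases ha : a = 1
        · have : a ^ k * c = 1 := by rw [hc, ha]; simp
          exact absurd (hmin k (Or.inl this)) (by omega)
        · have : a ^ ((M - k - 1) + 1) = 1 := by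
            rw [show M - k - 1 + 1 = M - k by omega]; exact hd
          exact absurd (hmin _ (Or.inr ⟨this, ha⟩)) (by omega)
      · exact absurd (hmin k (Or.inr hk2)) (by omega)
  · refine ⟨Or.inr h2, fun k hk => ?_⟩
    by_contra hlt
    push_neg at hlt
    rcases hk with hk1 | hk2
    · have hc : c = a ^ k * (a ^ (2 * M))⁻¹ := by
        have := mul_inv_eq_one.mp hk1
        rw [this]; group
      have h2m : a ^ (2 * M) = a ^ (M - 1) := by
        rw [show 2 * M = (M + 1) + (M - 1) by omega, pow_add, h2.1, one_mul]
      have : a ^ (M - 1 - k) * c = 1 := by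
        rw [hc, h2m, ← mul_assoc, ← pow_add,
          show M - 1 - k + k = M - 1 by omega, mul_inv_cancel]
      exact absurd (hmin _ (Or.inl this)) (by omega)
    · exact absurd (hmin k (Or.inr hk2)) (by omega)

/-- Let `χ` be a bicharacter on `ℤⁿ` with values in an abelian group `G`, `E` a basis
of `ℤⁿ` and `i` an index such that all `m_{ij}` (for `j ≠ i`) exist.  Let
`E' = s_{i,E}(E)`, i.e. `e'_i = -e_i` and `e'_j = e_j + m_{ij} e_i` for `j ≠ i`.
Then for every `j ≠ i` the number `m'_{ij}` defined with respect to `E'` exists and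
equals `m_{ij}`; consequently `s_{i,E'} = s_{i,E}`. -/
theorem reflection_invariance {n : ℕ} {G : Type*} [CommGroup G]
    (χ : (Fin n → ℤ) → (Fin n → ℤ) → G)
    (hχ0l : ∀ e, χ 0 e = 1) (hχ0r : ∀ e, χ e 0 = 1)
    (hχl : ∀ x y z, χ (x + y) z = χ x z * χ y z)
    (hχr : ∀ x y z, χ x (y + z) = χ x y * χ x z)
    (b : Module.Basis (Fin n) ℤ (Fin n → ℤ)) (i : Fin n)
    (hex : ∀ j, j ≠ i → {m : ℕ | ReflCond χ (b i) (b j) m}.Nonempty)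
    (mij : Fin n → ℕ)
    (hmij : ∀ j, j ≠ i → mij j = sInf {m : ℕ | ReflCond χ (b i) (b j) m})
    (e' : Fin n → (Fin n → ℤ))
    (he'i : e' i = -b i)
    (he'j : ∀ j, j ≠ i → e' j = b j + (mij j : ℤ) • b i) :
    (∀ j, j ≠ i → {m : ℕ | ReflCond χ (e' i) (e' j) m}.Nonempty ∧
      sInf {m : ℕ | ReflCond χ (e' i) (e' j) m} = mij j) ∧
    (∀ s : (Fin n → ℤ) →ₗ[ℤ] (Fin n → ℤ),
      s (b i) = -b i → (∀ j, j ≠ i → s (b j) = b j + (mij j : ℤ) • b i) →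
      s (e' i) = -e' i ∧ ∀ j, j ≠ i → s (e' j) = e' j + (mij j : ℤ) • e' i) := by
  -- basic bicharacter facts
  have hnegr : ∀ x y, χ x (-y) = (χ x y)⁻¹ := by
    intro x y
    have h := hχr x y (-y)
    rw [add_neg_cancel, hχ0r] at h
    exact eq_inv_of_mul_eq_one_left (by rw [mul_comm]; exact h.symm)
  have hnegl : ∀ x y, χ (-x) y = (χ x y)⁻¹ := by
    intro x y
    have h := hχl x (-x) y
    rw [add_neg_cancel, hχ0l] at h
    exact eq_inv_of_mul_eq_one_left (by rw [mul_comm]; exact h.symm)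
  have hpowr : ∀ (x y : Fin n → ℤ) (k : ℕ), χ x (k • y) = χ x y ^ k := by
    intro x y k
    induction k with
    | zero => simpa using hχ0r x
    | succ k ih => rw [succ_nsmul, hχr, ih, pow_succ]
  have hpowl : ∀ (x y : Fin n → ℤ) (k : ℕ), χ (k • x) y = χ x y ^ k := by
    intro x y k
    induction k with
    | zero => simpa using hχ0l y
    | succ k ih => rw [succ_nsmul, hχl, ih, pow_succ]
  constructor
  · intro j hj
    set M := mij j with hMdef
    set a := χ (b i) (b i) with hadef
    set c := χ (b i) (b j) * χ (b j) (b i) with hcdef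
    -- key identities
    have hA : χ (e' i) (e' i) = a := by
      rw [he'i, hnegl, hnegr, inv_inv]
    have hBj : e' j = b j + (M : ℕ) • b i := by
      rw [he'j j hj, Nat.cast_smul_eq_nsmul]
    have hB : χ (e' i) (e' j) * χ (e' j) (e' i) = (c * a ^ (2 * M))⁻¹ := by
      rw [he'i, hBj, hnegl, hχr, hpowr, hχl, hpowl, hnegr, hnegr,
        inv_pow, ← mul_inv, ← mul_inv]
      congr 1
      rw [two_mul, pow_add, mul_mul_mul_comm]
    -- condition rewriting
    have hcond : ∀ m, ReflCond χ (e' i) (e' j) m ↔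
        (a ^ m * (c * a ^ (2 * M))⁻¹ = 1 ∨ (a ^ (m + 1) = 1 ∧ a ≠ 1)) := by
      intro m
      unfold ReflCond
      rw [hA, hB]
    have hold : ∀ m, ReflCond χ (b i) (b j) m ↔
        (a ^ m * c = 1 ∨ (a ^ (m + 1) = 1 ∧ a ≠ 1)) := fun m => Iff.rfl
    have hne := hex j hj
    have hMeq : M = sInf {m : ℕ | ReflCond χ (b i) (b j) m} := hmij j hj
    have hMmem : a ^ M * c = 1 ∨ (a ^ (M + 1) = 1 ∧ a ≠ 1) := by
      rw [← hold, hMeq]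
      exact Nat.sInf_mem hne
    have hMmin : ∀ k, (a ^ k * c = 1 ∨ (a ^ (k + 1) = 1 ∧ a ≠ 1)) → M ≤ k := by
      intro k hk
      rw [hMeq]
      exact Nat.sInf_le ((hold k).mpr hk)
    obtain ⟨hmem', hmin'⟩ := aux_refl a c M hMmem hMmin
    have hmemS : M ∈ {m : ℕ | ReflCond χ (e' i) (e' j) m} := (hcond M).mpr hmem'
    have hne' : {m : ℕ | ReflCond χ (e' i) (e' j) m}.Nonempty := ⟨M, hmemS⟩
    refine ⟨hne', le_antisymm (Nat.sInf_le hmemS) ?_⟩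
    exact hmin' _ ((hcond _).mp (Nat.sInf_mem hne'))
  · intro s hs1 hs2
    constructor
    · rw [he'i, map_neg, hs1, neg_neg]
    · intro j hj
      rw [he'j j hj, map_add, map_smul, hs1, hs2 j hj, he'i]
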